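/- Let b > 0, c > 0, T₀ > 0, and suppose R* ∈ (0, c) satisfies the stationarity condition (1/√(2π))·b·e^{−b²(c−R*)²/2} = (1 − Q(b(c−R*)))/R* together with R*·(1 − Q(b(c−R*))) > T₀. Then the fixed-point map F(R) = T₀/(1 − Q(b(c−R))) satisfies F'(R*) = T₀ / (R*·(1 − Q(b(c−R*)))) < 1. -/

import Mathlib

noncomputable def gaussQ (x : ℝ) : ℝ :=
  ∫ t in Set.Ioi x, (Real.sqrt (2 * Real.pi))⁻¹ * Real.exp (-t ^ 2 / 2)

namespace GaussAux

noncomputable def φ (t : ℝ) : ℝ := (Real.sqrt (2 * Real.pi))⁻¹ * Real.exp (-t ^ 2 / 2)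

lemma φ_cont : Continuous φ := by
  unfold φ
  fun_prop

lemma φ_integrable : MeasureTheory.Integrable φ := by
  have h : MeasureTheory.Integrable (fun t : ℝ => Real.exp (-(1/2) * t ^ 2)) :=
    integrable_exp_neg_mul_sq (by norm_num)
  have := h.const_mul (Real.sqrt (2 * Real.pi))⁻¹
  refine this.congr (Filter.Eventually.of_forall fun t => ?_)
  unfold φ; ring_nf

lemma gaussQ_eq (x : ℝ) : gaussQ x = gaussQ 0 - ∫ t in (0:ℝ)..x, φ t := by
  have hIic : ∀ a : ℝ, MeasureTheory.IntegrableOn φ (Set.Iic a) :=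
    fun a => φ_integrable.integrableOn
  have hIoi : ∀ a : ℝ, MeasureTheory.IntegrableOn φ (Set.Ioi a) :=
    fun a => φ_integrable.integrableOn
  have h1 := intervalIntegral.integral_Iic_add_Ioi (μ := MeasureTheory.volume)
    (f := φ) (b := x) (hIic x) (hIoi x)
  have h2 := intervalIntegral.integral_Iic_add_Ioi (μ := MeasureTheory.volume)
    (f := φ) (b := 0) (hIic 0) (hIoi 0)
  have h3 := intervalIntegral.integral_Iic_sub_Iic (μ := MeasureTheory.volume)
    (f := φ) (hIic 0) (hIic x)
  have hq : gaussQ x = ∫ t in Set.Ioi x, φ t := rfl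
  have hq0 : gaussQ 0 = ∫ t in Set.Ioi (0:ℝ), φ t := rfl
  rw [hq, hq0]
  linarith [h1, h2, h3]

lemma hasDerivAt_gaussQ (x : ℝ) : HasDerivAt gaussQ (-φ x) x := by
  have hd : HasDerivAt (fun y => ∫ t in (0:ℝ)..y, φ t) (φ x) x := by
    refine intervalIntegral.integral_hasDerivAt_right
      (φ_integrable.intervalIntegrable (a:=0) (b:=x)) ?_ φ_cont.continuousAt
    exact φ_cont.stronglyMeasurableAtFilter _ _
  have : HasDerivAt (fun y => gaussQ 0 - ∫ t in (0:ℝ)..y, φ t) (-φ x) x := by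
    simpa using hd.const_sub (gaussQ 0)
  refine this.congr_of_eventuallyEq ?_
  filter_upwards with y using (gaussQ_eq y)

end GaussAux

theorem contraction_at_stationary_point (T₀ b c R' : ℝ) (hT₀ : 0 < T₀) (hb : 0 < b)
    (hc : 0 < c) (hR' : R' ∈ Set.Ioo (0 : ℝ) c)
    (hstat : 1 / Real.sqrt (2 * Real.pi) * b * Real.exp (-(b ^ 2 * (c - R') ^ 2) / 2) =
      (1 - gaussQ (b * (c - R'))) / R')
    (hT : T₀ < R' * (1 - gaussQ (b * (c - R'))))
    (F : ℝ → ℝ) (hF : F = fun R => T₀ / (1 - gaussQ (b * (c - R)))) :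
    deriv F R' = T₀ / (R' * (1 - gaussQ (b * (c - R')))) ∧
    deriv F R' < 1 := by
  obtain ⟨hR0, hRc⟩ := hR'
  set Q := gaussQ (b * (c - R')) with hQ
  have hden : 0 < 1 - Q := by
    by_contra h
    push_neg at h
    nlinarith
  -- derivative of inner function R ↦ 1 - gaussQ (b*(c-R))
  have hinner : HasDerivAt (fun R : ℝ => b * (c - R)) (-b) R' := by
    have : HasDerivAt (fun R : ℝ => b * (c - R)) (b * (0 - 1)) R' :=
      ((hasDerivAt_const R' c).sub (hasDerivAt_id R')).const_mul b
    simpa using this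
  have hcomp : HasDerivAt (fun R : ℝ => gaussQ (b * (c - R)))
      (-GaussAux.φ (b * (c - R')) * (-b)) R' :=
    HasDerivAt.comp (h₂ := gaussQ) R' (GaussAux.hasDerivAt_gaussQ (b * (c - R'))) hinner
  have hG : HasDerivAt (fun R : ℝ => 1 - gaussQ (b * (c - R)))
      (-(b * GaussAux.φ (b * (c - R')))) R' := by
    have := hcomp.const_sub (1:ℝ)
    rw [show -(b * GaussAux.φ (b * (c - R'))) = -(-GaussAux.φ (b * (c - R')) * -b) by ring]
    exact this
  have hFderiv : HasDerivAt F
      ((0 * (1 - Q) - T₀ * (-(b * GaussAux.φ (b * (c - R'))))) / (1 - Q) ^ 2) R' := by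
    rw [hF]
    exact (hasDerivAt_const R' T₀).div hG (by simpa [hQ] using hden.ne')
  have hbphi : b * GaussAux.φ (b * (c - R')) = (1 - Q) / R' := by
    rw [← hstat]
    unfold GaussAux.φ
    rw [mul_pow]
    ring
  have hderiv : deriv F R' = T₀ / (R' * (1 - Q)) := by
    rw [hFderiv.deriv, hbphi]
    field_simp
    ring
  refine ⟨hderiv, ?_⟩
  rw [hderiv]
  rw [div_lt_one (by positivity)]
  exact hT
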